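/- Let D=(V,A) be a digraph and S a multiset of V. There exists a packing of reachability s-arborescences in D, one rooted at each element s of S (counted with multiplicity), if and only if d_A^-(X) ≥ |S_{P_D^X}| − |S_X| for every subset X of V. (Kamiyama–Katoh–Takizawa theorem) -/

import Mathlib

/- Common definitions for formalizing packing-of-arborescences theorems.

Conventions:
* A digraph on a finite vertex type `V` is given by a finite multiset of arcs
  `A : Multiset (V × V)`, an arc `(u, v)` having tail `u` and head `v`.
* An undirected (multi)graph is given by a multiset of edges `E : Multiset (V × V)`,
  an edge being recorded as an (arbitrarily ordered) pair of its endpoints.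
* A multiset `S` of vertices (e.g. of roots) is given by a finite index type `S`
  together with a placement map `π : S → V`; the multiplicity of a vertex `v` is
  the size of the fiber over `v`.
* A dypergraph is given by a multiset `𝒜 : Multiset (Finset V × V)` of dyperedges
  `(Z, z)` with tail set `Z` and head `z`; a hypergraph by a multiset
  `ℰ : Multiset (Finset V)` of hyperedges. -/

attribute [local instance] Classical.propDecidable

noncomputable section

namespace ArborPaper

variable {V : Type*} [Fintype V] [DecidableEq V]

/-- An arc `a = (u, v)` (tail `u`, head `v`) enters `X` if its head is in `X`
and its tail is outside. -/
def arcEnters (a : V × V) (X : Finset V) : Prop := a.2 ∈ X ∧ a.1 ∉ X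

/-- An undirected edge (given by a pair of endpoints) enters `X` if exactly one of
its endpoints is in `X`. -/
def edgeEnters (e : V × V) (X : Finset V) : Prop :=
  (e.1 ∈ X ∧ e.2 ∉ X) ∨ (e.2 ∈ X ∧ e.1 ∉ X)

/-- The in-degree `d⁻_A(X)` of a vertex set `X`. -/
def inDeg (A : Multiset (V × V)) (X : Finset V) : ℕ :=
  (A.filter fun a => arcEnters a X).card

/-- The in-degree of a single vertex. -/
def inDegV (A : Multiset (V × V)) (v : V) : ℕ :=
  (A.filter fun a => a.2 = v).card

/-- Reachability by a directed path using the arcs of `A`. -/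
def Reaches (A : Multiset (V × V)) (u v : V) : Prop :=
  Relation.ReflTransGen (fun x y => (x, y) ∈ A) u v

/-- `P_D^X` : the set of vertices from which some vertex of `X` is reachable. -/
def PD (A : Multiset (V × V)) (X : Finset V) : Finset V :=
  Finset.univ.filter fun u => ∃ v ∈ X, Reaches A u v

/-- `Q_D^X` : the set of vertices reachable from some vertex of `X`. -/
def QD (A : Multiset (V × V)) (X : Finset V) : Finset V :=
  Finset.univ.filter fun v => ∃ u ∈ X, Reaches A u v

/-- `C` is a strongly connected component of the digraph `(V, A)`. -/
def IsSCCD (A : Multiset (V × V)) (C : Finset V) : Prop :=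
  ∃ v : V, C = Finset.univ.filter fun u => Reaches A u v ∧ Reaches A v u

/-- `B` is an `s`-arborescence with vertex set `U` : all arcs lie inside `U`,
every vertex of `U` other than `s` has in-degree exactly `1`, the root has
in-degree `0`, and every vertex of `U` is reachable from `s`
(equivalently: no circuit and all in-degrees of non-root vertices equal `1`). -/
def IsArborOn (B : Multiset (V × V)) (U : Finset V) (s : V) : Prop :=
  s ∈ U ∧ (∀ a ∈ B, a.1 ∈ U ∧ a.2 ∈ U) ∧
  (∀ v ∈ U, v ≠ s → inDegV B v = 1) ∧ inDegV B s = 0 ∧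
  ∀ v ∈ U, Reaches B s v

/-- `B` is a spanning `s`-arborescence (vertex set all of `V`). -/
def IsSpanningArbor (B : Multiset (V × V)) (s : V) : Prop :=
  IsArborOn B Finset.univ s

/-- One step along a mixed graph: an arc of `A`, or an edge of `E` in either direction. -/
def MStep (E A : Multiset (V × V)) (u v : V) : Prop :=
  (u, v) ∈ A ∨ (u, v) ∈ E ∨ (v, u) ∈ E

/-- Reachability by a mixed path in the mixed graph `(V, E ∪ A)`. -/
def MReaches (E A : Multiset (V × V)) (u v : V) : Prop :=
  Relation.ReflTransGen (MStep E A) u v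

/-- `P_F^X` for a mixed graph `F = (V, E ∪ A)`. -/
def PF (E A : Multiset (V × V)) (X : Finset V) : Finset V :=
  Finset.univ.filter fun u => ∃ v ∈ X, MReaches E A u v

/-- `Q_F^X` for a mixed graph `F = (V, E ∪ A)`. -/
def QF (E A : Multiset (V × V)) (X : Finset V) : Finset V :=
  Finset.univ.filter fun v => ∃ u ∈ X, MReaches E A u v

/-- `C` is a strongly connected component of the mixed graph `(V, E ∪ A)`. -/
def IsSCC (E A : Multiset (V × V)) (C : Finset V) : Prop :=
  ∃ v : V, C = Finset.univ.filter fun u => MReaches E A u v ∧ MReaches E A v u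

/-- `e_{E∪A}(𝒫)` : the number of edges of `E` and arcs of `A` entering at least one
member of the family `P`. -/
def eMixed (E A : Multiset (V × V)) (P : Finset (Finset V)) : ℕ :=
  (E.filter fun e => ∃ X ∈ P, edgeEnters e X).card +
  (A.filter fun a => ∃ X ∈ P, arcEnters a X).card

/-- A subpartition of `V` : a set of pairwise disjoint nonempty subsets. -/
def IsSubpartition (P : Finset (Finset V)) : Prop :=
  (∀ X ∈ P, X.Nonempty) ∧ ∀ X ∈ P, ∀ Y ∈ P, X ≠ Y → Disjoint X Y

/-- `Eo` is an orientation of the multiset `E` of undirected edges: each edge is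
kept or swapped. -/
def IsOrientationOf (E Eo : Multiset (V × V)) : Prop :=
  Multiset.Rel (fun e a => a = e ∨ a = Prod.swap e) E Eo

/-- The rank function of a matroid on a finite ground type `S`. -/
structure RankFn (S : Type*) [Fintype S] [DecidableEq S] where
  r : Finset S → ℕ
  rank_le_card : ∀ X : Finset S, r X ≤ X.card
  mono : ∀ ⦃X Y : Finset S⦄, X ⊆ Y → r X ≤ r Y
  submodular : ∀ X Y : Finset S, r (X ∪ Y) + r (X ∩ Y) ≤ r X + r Y

/-- `B` is a basis of `T` in the matroid with rank function `M` : an independent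
subset of `T` of full rank in `T`. -/
def RankFn.IsBasisOf {S : Type*} [Fintype S] [DecidableEq S] (M : RankFn S)
    (B T : Finset S) : Prop :=
  B ⊆ T ∧ M.r B = B.card ∧ M.r B = M.r T

/-- A dyperedge `a = (Z, z)` enters `X` if its head `z` is in `X` and some tail
vertex lies outside `X`. -/
def dypEnters (a : Finset V × V) (X : Finset V) : Prop :=
  a.2 ∈ X ∧ (a.1 \ X).Nonempty

/-- The in-degree `d⁻_𝒜(X)` in a dypergraph. -/
def dypInDeg (𝒜 : Multiset (Finset V × V)) (X : Finset V) : ℕ :=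
  (𝒜.filter fun a => dypEnters a X).card

/-- A hyperedge `e` enters `X` if it meets both `X` and its complement. -/
def hypEnters (e X : Finset V) : Prop := (e ∩ X).Nonempty ∧ (e \ X).Nonempty

/-- `e_{ℰ∪𝒜}(𝒫)` for a mixed hypergraph: the number of hyperedges of `ℰ` and
dyperedges of `𝒜` entering at least one member of `P`. -/
def eMH (ℰ : Multiset (Finset V)) (𝒜 : Multiset (Finset V × V))
    (P : Finset (Finset V)) : ℕ :=
  (ℰ.filter fun e => ∃ X ∈ P, hypEnters e X).card +
  (𝒜.filter fun a => ∃ X ∈ P, dypEnters a X).card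

/-- `B` is obtained from the multiset `𝒵` of dyperedges by trimming each
dyperedge `(Z, z)` to an arc `(y, z)` with `y ∈ Z`. -/
def Trims (𝒵 : Multiset (Finset V × V)) (B : Multiset (V × V)) : Prop :=
  Multiset.Rel (fun a b => b.2 = a.2 ∧ b.1 ∈ a.1) 𝒵 B

/-- `𝒟` is an orientation of the multiset `ℰ` of hyperedges: each hyperedge `X`
is replaced by a dyperedge `(X − x, x)` for some `x ∈ X`. -/
def Orients (ℰ : Multiset (Finset V)) (𝒟 : Multiset (Finset V × V)) : Prop :=
  Multiset.Rel (fun e a => a.2 ∈ e ∧ a.1 = e.erase a.2) ℰ 𝒟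

set_option linter.unusedSectionVars false

/-! ### helper lemmas on countP -/

lemma countP_mono_of_imp {α : Type*} {p q : α → Prop} [DecidablePred p] [DecidablePred q] (s : Multiset α)
    (h : ∀ a ∈ s, p a → q a) : s.countP p ≤ s.countP q := by
  induction s using Multiset.induction with
  | empty => simp
  | cons b s ih =>
    rw [Multiset.countP_cons, Multiset.countP_cons]
    have hb : ∀ a ∈ s, p a → q a := fun a ha => h a (Multiset.mem_cons_of_mem ha)
    have := ih hb
    by_cases hp : p b
    · have hq : q b := h b (Multiset.mem_cons_self b s) hp
      simp [hp, hq]; omega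
    · simp [hp]; split <;> omega

lemma countP_le_add {α : Type*} {p q r : α → Prop} [DecidablePred p] [DecidablePred q] [DecidablePred r] (s : Multiset α)
    (h : ∀ a ∈ s, p a → q a ∨ r a) : s.countP p ≤ s.countP q + s.countP r := by
  induction s using Multiset.induction with
  | empty => simp
  | cons b s ih =>
    rw [Multiset.countP_cons, Multiset.countP_cons, Multiset.countP_cons]
    have hb : ∀ a ∈ s, p a → q a ∨ r a := fun a ha => h a (Multiset.mem_cons_of_mem ha)
    have := ih hb
    by_cases hp : p b
    · rcases h b (Multiset.mem_cons_self b s) hp with hq | hr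
      · simp only [hp, hq, if_true]; split <;> omega
      · simp only [hp, hr, if_true]; split <;> omega
    · simp only [hp, if_false]; split <;> split <;> omega

lemma inDeg_eq_countP (A : Multiset (V × V)) (X : Finset V) :
    inDeg A X = A.countP fun a => arcEnters a X := by
  simp [inDeg, Multiset.countP_eq_card_filter]

/-- submodularity of in-degree -/
lemma inDeg_submodular (A : Multiset (V × V)) (X Y : Finset V) :
    inDeg A (X ∪ Y) + inDeg A (X ∩ Y) ≤ inDeg A X + inDeg A Y := by
  simp only [inDeg_eq_countP]
  induction A using Multiset.induction with
  | empty => simp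
  | cons b A ih =>
    simp only [Multiset.countP_cons]
    have hb : (if arcEnters b (X ∪ Y) then 1 else 0) + (if arcEnters b (X ∩ Y) then 1 else 0) ≤
        (if arcEnters b X then 1 else 0) + (if arcEnters b Y then 1 else 0) := by
      simp only [arcEnters, Finset.mem_union, Finset.mem_inter]
      by_cases h1 : b.2 ∈ X <;> by_cases h2 : b.2 ∈ Y <;> by_cases h3 : b.1 ∈ X <;>
        by_cases h4 : b.1 ∈ Y <;> simp [h1, h2, h3, h4]
    omega

lemma inDeg_le_of_le {A A' : Multiset (V × V)} (h : A ≤ A') (X : Finset V) :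
    inDeg A X ≤ inDeg A' X := by
  simp only [inDeg_eq_countP]; exact Multiset.countP_le_of_le _ h

lemma inDeg_add (A A' : Multiset (V × V)) (X : Finset V) :
    inDeg (A + A') X = inDeg A X + inDeg A' X := by
  simp only [inDeg_eq_countP]; exact Multiset.countP_add _ _ _

lemma inDegV_add (A A' : Multiset (V × V)) (v : V) :
    inDegV (A + A') v = inDegV A v + inDegV A' v := by
  simp only [inDegV, ← Multiset.countP_eq_card_filter]; exact Multiset.countP_add _ _ _

lemma inDeg_sum {I : Type*} (s : Finset I) (B : I → Multiset (V × V)) (X : Finset V) :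
    inDeg (∑ i ∈ s, B i) X = ∑ i ∈ s, inDeg (B i) X := by
  classical
  induction s using Finset.induction with
  | empty => simp [inDeg]
  | insert a s hnot ih =>
                      rw [Finset.sum_insert hnot, Finset.sum_insert hnot, inDeg_add, ih]

lemma inDegV_sum {I : Type*} (s : Finset I) (B : I → Multiset (V × V)) (v : V) :
    inDegV (∑ i ∈ s, B i) v = ∑ i ∈ s, inDegV (B i) v := by
  classical
  induction s using Finset.induction with
  | empty => simp [inDegV]
  | insert a s hnot ih =>
                      rw [Finset.sum_insert hnot, Finset.sum_insert hnot, inDegV_add, ih]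

/-! ### reachability lemmas -/

lemma Reaches.refl (A : Multiset (V × V)) (v : V) : Reaches A v v := Relation.ReflTransGen.refl

lemma Reaches.trans {A : Multiset (V × V)} {u v w : V} (h1 : Reaches A u v)
    (h2 : Reaches A v w) : Reaches A u w := Relation.ReflTransGen.trans h1 h2

lemma Reaches.mono {A A' : Multiset (V × V)} (h : ∀ a : V × V, a ∈ A → a ∈ A') {u v : V}
    (hr : Reaches A u v) : Reaches A' u v := by
  refine Relation.ReflTransGen.mono (fun x y hxy => ?_) _ _ hr
  exact h (x, y) hxy

/-- crossing a predicate boundary along a path -/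
lemma reaches_cross {A : Multiset (V × V)} {u v : V} (P : V → Prop)
    (h : Reaches A u v) (hu : P u) (hv : ¬ P v) :
    ∃ a : V × V, a ∈ A ∧ P a.1 ∧ ¬ P a.2 := by
  induction h with
  | refl => exact absurd hu hv
  | tail hab hbc ih =>
    rename_i b c
    by_cases hb : P b
    · exact ⟨(b, c), hbc, hb, hv⟩
    · exact ih hb

def Closed (A : Multiset (V × V)) (T : Finset V) : Prop := ∀ a : V × V, a ∈ A → a.1 ∈ T → a.2 ∈ T

lemma Closed.reach {A : Multiset (V × V)} {T : Finset V} (hT : Closed A T) {u v : V}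
    (hu : u ∈ T) (h : Reaches A u v) : v ∈ T := by
  induction h with
  | refl => exact hu
  | tail hab hbc ih => exact hT _ hbc ih

lemma mem_QD {A : Multiset (V × V)} {X : Finset V} {v : V} :
    v ∈ QD A X ↔ ∃ u ∈ X, Reaches A u v := by simp [QD]

lemma mem_PD {A : Multiset (V × V)} {X : Finset V} {u : V} :
    u ∈ PD A X ↔ ∃ v ∈ X, Reaches A u v := by simp [PD]

lemma mem_QD_singleton {A : Multiset (V × V)} {t v : V} :
    v ∈ QD A {t} ↔ Reaches A t v := by simp [QD]

lemma QD_closed (A : Multiset (V × V)) (X : Finset V) : Closed A (QD A X) := by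
  intro a ha h1
  rw [mem_QD] at h1 ⊢
  obtain ⟨u, hu, hr⟩ := h1
  exact ⟨u, hu, hr.tail ha⟩



/-! ### requirement functions -/

variable {I : Type*} [Fintype I]

def pReq (U T : I → Finset V) (X : Finset V) : ℕ :=
  (Finset.univ.filter fun i => (U i ∩ X) = ∅ ∧ ((T i) ∩ X).Nonempty).card

def Cond (A : Multiset (V × V)) (U T : I → Finset V) : Prop :=
  ∀ X : Finset V, pReq U T X ≤ inDeg A X

def IsBranch (B : Multiset (V × V)) (U T : Finset V) : Prop :=
  (∀ a : V × V, a ∈ B → a.1 ∈ T ∧ a.2 ∈ T \ U) ∧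
  (∀ v ∈ T \ U, inDegV B v = 1) ∧
  (∀ v ∈ T, ∃ u ∈ U, Reaches B u v)

def qReq (J : Finset I) (U : I → Finset V) (X : Finset V) : ℕ :=
  (J.filter fun i => U i ∩ X = ∅).card

lemma cond_T_subset_Q {A : Multiset (V × V)} {U T : I → Finset V}
    (hcond : Cond A U T) (i : I) : T i ⊆ QD A (U i) := by
  intro y0 hy0T
  by_contra hy0Q
  set X := PD A ((T i) \ QD A (U i)) with hXdef
  have hd : inDeg A X = 0 := by
    rw [inDeg_eq_countP, Multiset.countP_eq_zero]
    intro a ha hent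
    obtain ⟨h2, h1⟩ := hent
    rw [hXdef, mem_PD] at h2
    obtain ⟨v, hv, hr⟩ := h2
    exact h1 (mem_PD.2 ⟨v, hv, Relation.ReflTransGen.head ha hr⟩)
  have hp : 1 ≤ pReq U T X := by
    rw [pReq, Finset.one_le_card]
    refine ⟨i, Finset.mem_filter.2 ⟨Finset.mem_univ _, ?_, ?_⟩⟩
    · rw [Finset.eq_empty_iff_forall_notMem]
      intro u hu
      obtain ⟨huU, huX⟩ := Finset.mem_inter.1 hu
      rw [hXdef, mem_PD] at huX
      obtain ⟨v, hv, hr⟩ := huX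
      exact (Finset.mem_sdiff.1 hv).2 (mem_QD.2 ⟨u, huU, hr⟩)
    · refine ⟨y0, Finset.mem_inter.2 ⟨hy0T, ?_⟩⟩
      exact mem_PD.2 ⟨y0, Finset.mem_sdiff.2 ⟨hy0T, hy0Q⟩, Relation.ReflTransGen.refl⟩
  have := hcond X
  omega

lemma reaches_cross' {A : Multiset (V × V)} {u v : V} (P : V → Prop)
    (h : Reaches A u v) (hu : P u) (hv : ¬ P v) :
    ∃ a : V × V, a ∈ A ∧ P a.1 ∧ ¬ P a.2 ∧ Reaches A u a.1 := by
  induction h with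
  | refl => exact absurd hu hv
  | tail hab hbc ih =>
    rename_i b c
    by_cases hb : P b
    · exact ⟨(b, c), hbc, hb, hv, hab⟩
    · exact ih hb

lemma pReq_eq_qReq {U T : I → Finset V} {C : Finset V}
    (hT1 : ∀ i, T i \ U i ⊆ C) (hT4 : ∀ i, (T i ∩ C).Nonempty → C ⊆ T i)
    {X : Finset V} (hX : (X ∩ C).Nonempty) :
    pReq U T X = qReq (Finset.univ.filter fun i => C ⊆ T i) U X := by
  unfold pReq qReq
  apply congrArg
  rw [Finset.filter_filter]
  apply Finset.filter_congr
  intro i _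
  constructor
  · rintro ⟨hUe, t, htmem⟩
    obtain ⟨htT, htX⟩ := Finset.mem_inter.1 htmem
    have htU : t ∉ U i := by
      intro h
      rw [Finset.eq_empty_iff_forall_notMem] at hUe
      exact hUe t (Finset.mem_inter.2 ⟨h, htX⟩)
    have htC : t ∈ C := hT1 i (Finset.mem_sdiff.2 ⟨htT, htU⟩)
    exact ⟨hT4 i ⟨t, Finset.mem_inter.2 ⟨htT, htC⟩⟩, hUe⟩
  · rintro ⟨hCT, hUe⟩
    obtain ⟨c, hc⟩ := hX
    obtain ⟨hcX, hcC⟩ := Finset.mem_inter.1 hc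
    exact ⟨hUe, ⟨c, Finset.mem_inter.2 ⟨hCT hcC, hcX⟩⟩⟩

lemma inter_inter_empty_l {U X Y : Finset V} (h : U ∩ X = ∅) : U ∩ (X ∩ Y) = ∅ := by
  rw [Finset.eq_empty_iff_forall_notMem] at h ⊢
  intro v hv
  simp only [Finset.mem_inter] at hv
  exact h v (Finset.mem_inter.2 ⟨hv.1, hv.2.1⟩)

lemma inter_inter_empty_r {U X Y : Finset V} (h : U ∩ Y = ∅) : U ∩ (X ∩ Y) = ∅ := by
  rw [Finset.eq_empty_iff_forall_notMem] at h ⊢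
  intro v hv
  simp only [Finset.mem_inter] at hv
  exact h v (Finset.mem_inter.2 ⟨hv.1, hv.2.2⟩)

lemma qReq_supermod (J : Finset I) (U : I → Finset V) (X Y : Finset V) :
    qReq J U X + qReq J U Y ≤ qReq J U (X ∪ Y) + qReq J U (X ∩ Y) := by
  unfold qReq
  rw [Finset.card_filter, Finset.card_filter, Finset.card_filter, Finset.card_filter,
    ← Finset.sum_add_distrib, ← Finset.sum_add_distrib]
  apply Finset.sum_le_sum
  intro i _
  have f2 : U i ∩ (X ∪ Y) = ∅ ↔ (U i ∩ X = ∅ ∧ U i ∩ Y = ∅) := by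
    rw [Finset.inter_union_distrib_left, Finset.union_eq_empty]
  by_cases hX : U i ∩ X = ∅
  · have hInt : U i ∩ (X ∩ Y) = ∅ := inter_inter_empty_l hX
    by_cases hY : U i ∩ Y = ∅
    · simp [hX, hY, hInt, f2.2 ⟨hX, hY⟩]
    · have hUn : ¬ (U i ∩ (X ∪ Y) = ∅) := fun h => hY (f2.1 h).2
      simp [hX, hY, hInt, hUn]
  · have hUn : ¬ (U i ∩ (X ∪ Y) = ∅) := fun h => hX (f2.1 h).1
    by_cases hY : U i ∩ Y = ∅
    · have hInt : U i ∩ (X ∩ Y) = ∅ := inter_inter_empty_r hY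
      simp [hX, hY, hInt, hUn]
    · simp [hX, hY, hUn]

lemma qReq_supermod_strict (J : Finset I) (U : I → Finset V) (X Y : Finset V)
    (i₀ : I) (hi₀ : i₀ ∈ J) (hX : U i₀ ∩ X ≠ ∅) (hY : U i₀ ∩ Y ≠ ∅)
    (hI : U i₀ ∩ (X ∩ Y) = ∅) :
    qReq J U X + qReq J U Y + 1 ≤ qReq J U (X ∪ Y) + qReq J U (X ∩ Y) := by
  unfold qReq
  rw [Finset.card_filter, Finset.card_filter, Finset.card_filter, Finset.card_filter,
    ← Finset.sum_add_distrib, ← Finset.sum_add_distrib]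
  have hlt : ∑ i ∈ J, ((if U i ∩ X = ∅ then 1 else 0) + if U i ∩ Y = ∅ then 1 else 0) <
      ∑ i ∈ J, ((if U i ∩ (X ∪ Y) = ∅ then 1 else 0) + if U i ∩ (X ∩ Y) = ∅ then 1 else 0) := by
    apply Finset.sum_lt_sum
    · intro i _
      have f2 : U i ∩ (X ∪ Y) = ∅ ↔ (U i ∩ X = ∅ ∧ U i ∩ Y = ∅) := by
        rw [Finset.inter_union_distrib_left, Finset.union_eq_empty]
      by_cases hX' : U i ∩ X = ∅
      · have hInt : U i ∩ (X ∩ Y) = ∅ := inter_inter_empty_l hX'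
        by_cases hY' : U i ∩ Y = ∅
        · simp [hX', hY', hInt, f2.2 ⟨hX', hY'⟩]
        · have hUn : ¬ (U i ∩ (X ∪ Y) = ∅) := fun h => hY' (f2.1 h).2
          simp [hX', hY', hInt, hUn]
      · have hUn : ¬ (U i ∩ (X ∪ Y) = ∅) := fun h => hX' (f2.1 h).1
        by_cases hY' : U i ∩ Y = ∅
        · have hInt : U i ∩ (X ∩ Y) = ∅ := inter_inter_empty_r hY'
          simp [hX', hY', hInt, hUn]
        · simp [hX', hY', hUn]
    · refine ⟨i₀, hi₀, ?_⟩
      have hUn : ¬ (U i₀ ∩ (X ∪ Y) = ∅) := by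
        rw [Finset.inter_union_distrib_left, Finset.union_eq_empty]
        tauto
      simp [hX, hY, hI, hUn]
  omega

/-! ### the exchange lemma -/

lemma exchange (A : Multiset (V × V)) (U T : I → Finset V) (C : Finset V)
    (hUT : ∀ i, U i ⊆ T i)
    (hcl : ∀ i, Closed A (T i))
    (hT1 : ∀ i, T i \ U i ⊆ C)
    (hT4 : ∀ i, (T i ∩ C).Nonempty → C ⊆ T i)
    (hcond : Cond A U T) (i₀ : I) (hne : (T i₀ \ U i₀).Nonempty) :
    ∃ x y : V, (x, y) ∈ A ∧ x ∈ U i₀ ∧ y ∈ T i₀ ∧ y ∉ U i₀ ∧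
      ∀ X : Finset V, y ∈ X → x ∉ X → (U i₀ ∩ X).Nonempty →
        pReq U T X + 1 ≤ inDeg A X := by
  classical
  set J : Finset I := Finset.univ.filter (fun i => C ⊆ T i) with hJdef
  set Bad : Finset (Finset V) := Finset.univ.filter
    (fun X => inDeg A X = pReq U T X ∧ (X ∩ (T i₀ \ U i₀)).Nonempty ∧
      (X ∩ U i₀).Nonempty) with hBdef
  by_cases hBad : Bad = ∅
  · -- no dangerous tight sets at all: any candidate arc works
    obtain ⟨v₀, hv₀⟩ := hne
    obtain ⟨hv₀T, hv₀U⟩ := Finset.mem_sdiff.1 hv₀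
    have hQ : v₀ ∈ QD A (U i₀) := cond_T_subset_Q hcond i₀ hv₀T
    obtain ⟨u, huU, hr⟩ := mem_QD.1 hQ
    obtain ⟨a, haA, haP, haN, har⟩ := reaches_cross' (· ∈ U i₀) hr huU hv₀U
    have ha1T : a.1 ∈ T i₀ := (hcl i₀).reach (hUT i₀ huU) har
    have ha2T : a.2 ∈ T i₀ := hcl i₀ a haA ha1T
    refine ⟨a.1, a.2, by simpa using haA, haP, ha2T, haN, ?_⟩
    intro X hyX hxX hUX
    by_contra hcon
    push_neg at hcon
    have htight : inDeg A X = pReq U T X := by have := hcond X; omega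
    have : X ∈ Bad := by
      rw [hBdef, Finset.mem_filter]
      exact ⟨Finset.mem_univ _, htight,
        ⟨a.2, Finset.mem_inter.2 ⟨hyX, Finset.mem_sdiff.2 ⟨ha2T, haN⟩⟩⟩,
        by rwa [Finset.inter_comm] at hUX⟩
    rw [hBad] at this
    exact absurd this (Finset.notMem_empty _)
  · -- take a minimum-cardinality dangerous tight set
    obtain ⟨Xs, hXsBad, hmin⟩ := Finset.exists_min_image Bad Finset.card
      (Finset.nonempty_iff_ne_empty.2 hBad)
    rw [hBdef, Finset.mem_filter] at hXsBad
    obtain ⟨-, htight, ⟨ys, hys⟩, hUXs⟩ := hXsBad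
    obtain ⟨hysX, hysTU⟩ := Finset.mem_inter.1 hys
    obtain ⟨hysT, hysU⟩ := Finset.mem_sdiff.1 hysTU
    have hysC : ys ∈ C := hT1 i₀ hysTU
    have hi₀J : i₀ ∈ J := by
      rw [hJdef, Finset.mem_filter]
      exact ⟨Finset.mem_univ _, hT4 i₀ ⟨ys, Finset.mem_inter.2 ⟨hysT, hysC⟩⟩⟩
    set D : Finset V := Xs \ U i₀ with hDdef
    have hysD : ys ∈ D := Finset.mem_sdiff.2 ⟨hysX, hysU⟩
    -- pReq = qReq on sets meeting C
    have hpqXs : pReq U T Xs = qReq J U Xs :=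
      pReq_eq_qReq hT1 hT4 ⟨ys, Finset.mem_inter.2 ⟨hysX, hysC⟩⟩
    have hpqD : pReq U T D = qReq J U D :=
      pReq_eq_qReq hT1 hT4 ⟨ys, Finset.mem_inter.2 ⟨hysD, hysC⟩⟩
    -- q(D) ≥ q(Xs) + 1
    have hq1 : qReq J U Xs + 1 ≤ qReq J U D := by
      have hnotin : i₀ ∉ J.filter (fun i => U i ∩ Xs = ∅) := by
        intro h
        have hemp := (Finset.mem_filter.1 h).2
        obtain ⟨w, hw⟩ := hUXs
        obtain ⟨hw1, hw2⟩ := Finset.mem_inter.1 hw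
        rw [Finset.eq_empty_iff_forall_notMem] at hemp
        exact hemp w (Finset.mem_inter.2 ⟨hw2, hw1⟩)
      have hsub : insert i₀ (J.filter fun i => U i ∩ Xs = ∅) ⊆
          J.filter (fun i => U i ∩ D = ∅) := by
        intro i hi
        rcases Finset.mem_insert.1 hi with h | h
        · subst h
          refine Finset.mem_filter.2 ⟨hi₀J, ?_⟩
          rw [hDdef, Finset.eq_empty_iff_forall_notMem]
          intro v hv
          obtain ⟨hv1, hv2⟩ := Finset.mem_inter.1 hv
          exact (Finset.mem_sdiff.1 hv2).2 hv1
        · obtain ⟨hiJ, hie⟩ := Finset.mem_filter.1 h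
          refine Finset.mem_filter.2 ⟨hiJ, ?_⟩
          rw [Finset.eq_empty_iff_forall_notMem]
          intro v hv
          obtain ⟨hv1, hv2⟩ := Finset.mem_inter.1 hv
          rw [Finset.eq_empty_iff_forall_notMem] at hie
          exact hie v (Finset.mem_inter.2 ⟨hv1, (Finset.mem_sdiff.1 hv2).1⟩)
      calc qReq J U Xs + 1 = (insert i₀ (J.filter fun i => U i ∩ Xs = ∅)).card := by
            rw [Finset.card_insert_of_notMem hnotin, qReq]
        _ ≤ _ := Finset.card_le_card hsub
    -- find the candidate arc inside Xs
    have hDbound : inDeg A D ≤ inDeg A Xs +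
        A.countP (fun a => a.1 ∈ Xs ∧ a.1 ∈ U i₀ ∧ a.2 ∈ D) := by
      rw [inDeg_eq_countP, inDeg_eq_countP]
      apply countP_le_add
      intro a _ hent
      obtain ⟨h2, h1⟩ := hent
      have h2X : a.2 ∈ Xs := (Finset.mem_sdiff.1 h2).1
      by_cases hx : a.1 ∈ Xs
      · right
        refine ⟨hx, ?_, h2⟩
        by_contra hxu
        exact h1 (Finset.mem_sdiff.2 ⟨hx, hxu⟩)
      · exact Or.inl ⟨h2X, hx⟩
    have hcount : 0 < A.countP (fun a => a.1 ∈ Xs ∧ a.1 ∈ U i₀ ∧ a.2 ∈ D) := by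
      have h1 := hcond D
      omega
    obtain ⟨a, haA, ha1X, ha1U, ha2D⟩ := Multiset.countP_pos.1 hcount
    obtain ⟨ha2X, ha2U⟩ := Finset.mem_sdiff.1 ha2D
    have ha2T : a.2 ∈ T i₀ := hcl i₀ a haA (hUT i₀ ha1U)
    have ha2C : a.2 ∈ C := hT1 i₀ (Finset.mem_sdiff.2 ⟨ha2T, ha2U⟩)
    refine ⟨a.1, a.2, by simpa using haA, ha1U, ha2T, ha2U, ?_⟩
    -- show the arc is unblocked
    intro X hyX hxX hUX
    by_contra hcon
    push_neg at hcon
    have htX : inDeg A X = pReq U T X := by have := hcond X; omega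
    set uni := Xs ∪ X with huni
    set int := Xs ∩ X with hint
    have hyint : a.2 ∈ int := Finset.mem_inter.2 ⟨ha2X, hyX⟩
    have hpquni : pReq U T uni = qReq J U uni :=
      pReq_eq_qReq hT1 hT4 ⟨a.2, Finset.mem_inter.2 ⟨Finset.mem_union_left _ ha2X, ha2C⟩⟩
    have hpqint : pReq U T int = qReq J U int :=
      pReq_eq_qReq hT1 hT4 ⟨a.2, Finset.mem_inter.2 ⟨hyint, ha2C⟩⟩
    have hpqX : pReq U T X = qReq J U X :=
      pReq_eq_qReq hT1 hT4 ⟨a.2, Finset.mem_inter.2 ⟨hyX, ha2C⟩⟩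
    have hsubmod := inDeg_submodular A Xs X
    rw [← huni, ← hint] at hsubmod
    have hcuni := hcond uni
    have hcint := hcond int
    by_cases hU2 : U i₀ ∩ int = ∅
    · have hXsne : U i₀ ∩ Xs ≠ ∅ := by
        obtain ⟨w, hw⟩ := hUXs
        obtain ⟨hw1, hw2⟩ := Finset.mem_inter.1 hw
        intro hemp
        rw [Finset.eq_empty_iff_forall_notMem] at hemp
        exact hemp w (Finset.mem_inter.2 ⟨hw2, hw1⟩)
      have hXne : U i₀ ∩ X ≠ ∅ := by
        obtain ⟨w, hw⟩ := hUX
        intro hemp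
        rw [Finset.eq_empty_iff_forall_notMem] at hemp
        exact hemp w hw
      have hstrict := qReq_supermod_strict J U Xs X i₀ hi₀J hXsne hXne hU2
      rw [← huni, ← hint] at hstrict
      omega
    · have hsmod := qReq_supermod J U Xs X
      rw [← huni, ← hint] at hsmod
      have htint : inDeg A int = pReq U T int := by omega
      have hintBad : int ∈ Bad := by
        rw [hBdef, Finset.mem_filter]
        refine ⟨Finset.mem_univ _, htint,
          ⟨a.2, Finset.mem_inter.2 ⟨hyint, Finset.mem_sdiff.2 ⟨ha2T, ha2U⟩⟩⟩, ?_⟩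
        rw [Finset.inter_comm]
        exact Finset.nonempty_iff_ne_empty.2 hU2
      have hlt : int.card < Xs.card := by
        apply Finset.card_lt_card
        constructor
        · exact Finset.inter_subset_left
        · intro hsub
          exact hxX (Finset.mem_inter.1 (hsub ha1X)).2
      exact absurd (hmin int hintBad) (not_le.2 hlt)

/-! ### condition preservation and trivial branchings -/

lemma preserve_cond {A : Multiset (V × V)} {U T : I → Finset V} (hcond : Cond A U T)
    {i₀ : I} {x y : V} (ha : (x, y) ∈ A) (hyT : y ∈ T i₀)
    (hgood : ∀ X : Finset V, y ∈ X → x ∉ X → (U i₀ ∩ X).Nonempty →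
      pReq U T X + 1 ≤ inDeg A X) :
    Cond (A.erase (x, y)) (Function.update U i₀ (insert y (U i₀))) T := by
  classical
  intro X
  set U' := Function.update U i₀ (insert y (U i₀)) with hU'
  have hU'i₀ : U' i₀ = insert y (U i₀) := by rw [hU', Function.update_self]
  have hdeg : inDeg A X = inDeg (A.erase (x, y)) X +
      (if arcEnters (x, y) X then 1 else 0) := by
    conv_lhs => rw [← Multiset.cons_erase ha]
    rw [inDeg_eq_countP, inDeg_eq_countP, Multiset.countP_cons]
  have hple : pReq U' T X ≤ pReq U T X := by
    unfold pReq
    apply Finset.card_le_card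
    intro i hi
    obtain ⟨-, h1, h2⟩ := Finset.mem_filter.1 hi
    refine Finset.mem_filter.2 ⟨Finset.mem_univ _, ?_, h2⟩
    by_cases hii : i = i₀
    · subst hii
      rw [hU'i₀] at h1
      rw [Finset.eq_empty_iff_forall_notMem] at h1 ⊢
      intro v hv
      obtain ⟨hv1, hv2⟩ := Finset.mem_inter.1 hv
      exact h1 v (Finset.mem_inter.2 ⟨Finset.mem_insert_of_mem hv1, hv2⟩)
    · rwa [hU', Function.update_of_ne hii] at h1
  by_cases hent : arcEnters (x, y) X
  · have hyX : y ∈ X := hent.1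
    have hxX : x ∉ X := hent.2
    by_cases hUX : (U i₀ ∩ X).Nonempty
    · have h1 := hgood X hyX hxX hUX
      rw [if_pos hent] at hdeg
      omega
    · have hi₀mem : i₀ ∈ Finset.univ.filter
          (fun i => U i ∩ X = ∅ ∧ ((T i) ∩ X).Nonempty) := by
        refine Finset.mem_filter.2 ⟨Finset.mem_univ _, ?_,
          ⟨y, Finset.mem_inter.2 ⟨hyT, hyX⟩⟩⟩
        rwa [Finset.not_nonempty_iff_eq_empty] at hUX
      have hsub : (Finset.univ.filter fun i => U' i ∩ X = ∅ ∧ ((T i) ∩ X).Nonempty) ⊆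
          (Finset.univ.filter fun i => U i ∩ X = ∅ ∧ ((T i) ∩ X).Nonempty).erase i₀ := by
        intro i hi
        obtain ⟨-, h1, h2⟩ := Finset.mem_filter.1 hi
        have hii : i ≠ i₀ := by
          intro h
          subst h
          rw [hU'i₀, Finset.eq_empty_iff_forall_notMem] at h1
          exact h1 y (Finset.mem_inter.2 ⟨Finset.mem_insert_self _ _, hyX⟩)
        refine Finset.mem_erase.2 ⟨hii, Finset.mem_filter.2 ⟨Finset.mem_univ _, ?_, h2⟩⟩
        rwa [hU', Function.update_of_ne hii] at h1
      have hcard : pReq U' T X ≤ pReq U T X - 1 := by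
        calc pReq U' T X ≤ _ := Finset.card_le_card hsub
          _ = pReq U T X - 1 := by rw [Finset.card_erase_of_mem hi₀mem]; rfl
      have hp1 : 1 ≤ pReq U T X := by
        rw [pReq, Finset.one_le_card]
        exact ⟨i₀, hi₀mem⟩
      have h2 := hcond X
      rw [if_pos hent] at hdeg
      omega
  · rw [if_neg hent] at hdeg
    have := hcond X
    omega

lemma isBranch_zero {U T : Finset V} (h : T \ U = ∅) : IsBranch (0 : Multiset (V × V)) U T := by
  refine ⟨by simp, by simp [h], ?_⟩
  intro v hv
  have hvU : v ∈ U := by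
    by_contra hvU
    rw [Finset.eq_empty_iff_forall_notMem] at h
    exact h v (Finset.mem_sdiff.2 ⟨hv, hvU⟩)
  exact ⟨v, hvU, Relation.ReflTransGen.refl⟩

/-! ### the terminal theorem -/

lemma terminal_thm : ∀ (n : ℕ) (A : Multiset (V × V)) (U T : I → Finset V) (C : Finset V),
    (∀ i, U i ⊆ T i) → (∀ i, Closed A (T i)) → (∀ i, T i \ U i ⊆ C) →
    (∀ i, ((T i) ∩ C).Nonempty → C ⊆ T i) → Cond A U T →
    (∑ i, ((T i) \ U i).card) ≤ n →
    ∃ B : I → Multiset (V × V), (∑ i, B i) ≤ A ∧ ∀ i, IsBranch (B i) (U i) (T i) := by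
  intro n
  induction n with
  | zero =>
    intro A U T C hUT hcl hT1 hT4 hcond hsum
    refine ⟨fun _ => 0, by simp, fun i => isBranch_zero ?_⟩
    rw [← Finset.card_eq_zero]
    have := Finset.sum_eq_zero_iff.1 (Nat.le_zero.1 hsum)
    exact this i (Finset.mem_univ i)
  | succ n ih =>
    intro A U T C hUT hcl hT1 hT4 hcond hsum
    by_cases hfin : ∀ i, T i \ U i = ∅
    · exact ⟨fun _ => 0, by simp, fun i => isBranch_zero (hfin i)⟩
    · push_neg at hfin
      obtain ⟨i₀, hne0⟩ := hfin
      have hne : (T i₀ \ U i₀).Nonempty := hne0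
      obtain ⟨x, y, haA, hxU, hyT, hyU, hgood⟩ :=
        exchange A U T C hUT hcl hT1 hT4 hcond i₀ hne
      set U' := Function.update U i₀ (insert y (U i₀)) with hU'def
      have hU'i₀ : U' i₀ = insert y (U i₀) := by rw [hU'def, Function.update_self]
      set A' := A.erase (x, y) with hA'def
      have hcond' : Cond A' U' T := preserve_cond hcond haA hyT hgood
      have hUT' : ∀ i, U' i ⊆ T i := by
        intro i
        by_cases hii : i = i₀
        · subst hii
          rw [hU'i₀]
          exact Finset.insert_subset hyT (hUT i)
        · rw [hU'def, Function.update_of_ne hii]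
          exact hUT i
      have hcl' : ∀ i, Closed A' (T i) := fun i a ha =>
        hcl i a (Multiset.mem_of_mem_erase ha)
      have hT1' : ∀ i, T i \ U' i ⊆ C := by
        intro i v hv
        apply hT1 i
        obtain ⟨h1, h2⟩ := Finset.mem_sdiff.1 hv
        refine Finset.mem_sdiff.2 ⟨h1, fun hvU => h2 ?_⟩
        by_cases hii : i = i₀
        · subst hii
          rw [hU'i₀]
          exact Finset.mem_insert_of_mem hvU
        · rwa [hU'def, Function.update_of_ne hii]
      have hsum' : (∑ i, ((T i) \ U' i).card) ≤ n := by
        have hlt : ∑ i, ((T i) \ U' i).card < ∑ i, ((T i) \ U i).card := by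
          apply Finset.sum_lt_sum
          · intro i _
            apply Finset.card_le_card
            intro v hv
            obtain ⟨h1, h2⟩ := Finset.mem_sdiff.1 hv
            refine Finset.mem_sdiff.2 ⟨h1, fun hvU => h2 ?_⟩
            by_cases hii : i = i₀
            · subst hii
              rw [hU'i₀]
              exact Finset.mem_insert_of_mem hvU
            · rwa [hU'def, Function.update_of_ne hii]
          · refine ⟨i₀, Finset.mem_univ _, ?_⟩
            apply Finset.card_lt_card
            rw [hU'i₀]
            constructor
            · intro v hv
              obtain ⟨h1, h2⟩ := Finset.mem_sdiff.1 hv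
              exact Finset.mem_sdiff.2 ⟨h1, fun hvU => h2 (Finset.mem_insert_of_mem hvU)⟩
            · intro hsub
              have := hsub (Finset.mem_sdiff.2 ⟨hyT, hyU⟩)
              exact (Finset.mem_sdiff.1 this).2 (Finset.mem_insert_self _ _)
        omega
      obtain ⟨B, hBle, hBspec⟩ := ih A' U' T C hUT' hcl' hT1' hT4 hcond' hsum'
      refine ⟨Function.update B i₀ (B i₀ + {(x, y)}), ?_, ?_⟩
      · rw [Finset.sum_update_of_mem (Finset.mem_univ i₀)]
        have hsplit : B i₀ + ∑ i ∈ Finset.univ \ {i₀}, B i = ∑ i, B i := by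
          rw [← Finset.erase_eq]
          exact Finset.add_sum_erase _ _ (Finset.mem_univ i₀)
        have hsA : A' + {(x, y)} = A := by
          rw [add_comm, Multiset.singleton_add, hA'def, Multiset.cons_erase haA]
        calc B i₀ + {(x, y)} + ∑ i ∈ Finset.univ \ {i₀}, B i
            = (B i₀ + ∑ i ∈ Finset.univ \ {i₀}, B i) + {(x, y)} := by
              rw [add_right_comm]
          _ = (∑ i, B i) + {(x, y)} := by rw [hsplit]
          _ ≤ A' + {(x, y)} := add_le_add hBle le_rfl
          _ = A := hsA
      · intro i
        by_cases hii : i = i₀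
        · subst hii
          rw [Function.update_self]
          obtain ⟨hs1, hs2, hs3⟩ := hBspec i
          rw [hU'i₀] at hs1 hs2 hs3
          refine ⟨?_, ?_, ?_⟩
          · intro a ha
            rcases Multiset.mem_add.1 ha with h | h
            · obtain ⟨h1, h2⟩ := hs1 a h
              obtain ⟨h2T, h2U⟩ := Finset.mem_sdiff.1 h2
              exact ⟨h1, Finset.mem_sdiff.2
                ⟨h2T, fun hh => h2U (Finset.mem_insert_of_mem hh)⟩⟩
            · have haeq : a = (x, y) := Multiset.mem_singleton.1 h
              subst haeq
              exact ⟨hUT i hxU, Finset.mem_sdiff.2 ⟨hyT, hyU⟩⟩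
          · intro v hv
            obtain ⟨hvT, hvU⟩ := Finset.mem_sdiff.1 hv
            rw [inDegV_add]
            by_cases hvy : v = y
            · subst hvy
              have hz : inDegV (B i) v = 0 := by
                rw [inDegV, Multiset.card_eq_zero, Multiset.filter_eq_nil]
                intro a ha hay
                have h2 := (hs1 a ha).2
                exact (Finset.mem_sdiff.1 h2).2 (hay ▸ Finset.mem_insert_self v (U i))
              have ho : inDegV ({(x, v)} : Multiset (V × V)) v = 1 := by
                rw [inDegV, Multiset.filter_singleton, if_pos rfl, Multiset.card_singleton]
              omega
            · have h1 : inDegV (B i) v = 1 := by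
                apply hs2
                refine Finset.mem_sdiff.2 ⟨hvT, fun h => ?_⟩
                rcases Finset.mem_insert.1 h with h' | h'
                · exact hvy h'
                · exact hvU h'
              have h0 : inDegV ({(x, y)} : Multiset (V × V)) v = 0 := by
                rw [inDegV, Multiset.filter_singleton, if_neg (fun h => hvy h.symm)]
                simp
              omega
          · intro v hv
            obtain ⟨u, hu, hr⟩ := hs3 v hv
            have hmono : ∀ b : V × V, b ∈ B i → b ∈ B i + {(x, y)} :=
              fun b hb => Multiset.mem_add.2 (Or.inl hb)
            have hr' := Reaches.mono hmono hr
            rcases Finset.mem_insert.1 hu with h | h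
            · subst h
              have hxy : Reaches (B i + {(x, u)}) x u :=
                Relation.ReflTransGen.single
                  (Multiset.mem_add.2 (Or.inr (Multiset.mem_singleton.2 rfl)))
              exact ⟨x, hxU, hxy.trans hr'⟩
            · exact ⟨u, h, hr'⟩
        · rw [Function.update_of_ne hii]
          have hsp := hBspec i
          rwa [hU'def, Function.update_of_ne hii] at hsp

/-! ### the root-set reachability packing theorem -/

lemma thmR : ∀ (n : ℕ) (A : Multiset (V × V)) (U T : I → Finset V),
    (∀ i, U i ⊆ T i) → (∀ i, Closed A (T i)) → Cond A U T →
    (∑ i, (T i).card) ≤ n →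
    ∃ B : I → Multiset (V × V), (∑ i, B i) ≤ A ∧ ∀ i, IsBranch (B i) (U i) (T i) := by
  intro n
  induction n with
  | zero =>
    intro A U T hUT hcl hcond hsum
    refine ⟨fun _ => 0, by simp, fun i => isBranch_zero ?_⟩
    have h0 : (T i).card = 0 :=
      Finset.sum_eq_zero_iff.1 (Nat.le_zero.1 hsum) i (Finset.mem_univ i)
    rw [Finset.card_eq_zero.1 h0]
    exact Finset.empty_sdiff _
  | succ n ih =>
    intro A U T hUT hcl hcond hsum
    by_cases hfin : ∀ i, T i \ U i = ∅
    · exact ⟨fun _ => 0, by simp, fun i => isBranch_zero (hfin i)⟩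
    · push_neg at hfin
      obtain ⟨i₀, hne0⟩ := hfin
      obtain ⟨t₀, ht₀⟩ := hne0
      obtain ⟨ht₀T, ht₀U⟩ := Finset.mem_sdiff.1 ht₀
      obtain ⟨ts, htsQ, htsmin⟩ := Finset.exists_min_image (QD A {t₀})
        (fun t => (QD A {t}).card) ⟨t₀, mem_QD_singleton.2 (Reaches.refl A t₀)⟩
      set C := QD A {ts} with hCdef
      have htsC : ts ∈ C := mem_QD_singleton.2 (Reaches.refl A ts)
      have hCc : Closed A C := QD_closed A {ts}
      have hCQ : ∀ t ∈ C, QD A {t} = C := by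
        intro t ht
        have hsub2 : QD A {t} ⊆ C := by
          intro v hv
          rw [mem_QD_singleton] at hv ⊢
          exact (mem_QD_singleton.1 ht).trans hv
        have htQ : t ∈ QD A {t₀} := by
          rw [mem_QD_singleton]
          exact (mem_QD_singleton.1 htsQ).trans (mem_QD_singleton.1 ht)
        exact Finset.eq_of_subset_of_card_le hsub2 (htsmin t htQ)
      have hCsubT : ∀ i, ∀ t, t ∈ T i → t ∈ C → C ⊆ T i := by
        intro i t htT htC v hv
        rw [← hCQ t htC, mem_QD_singleton] at hv
        exact (hcl i).reach htT hv
      have htsT : ts ∈ T i₀ := (hcl i₀).reach ht₀T (mem_QD_singleton.1 htsQ)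
      set A2 := A.filter (fun a => a.2 ∈ C) with hA2
      set A1 := A.filter (fun a => ¬ a.2 ∈ C) with hA1
      have hA12 : A1 + A2 = A := by
        rw [hA1, hA2, add_comm]
        exact Multiset.filter_add_not _ _
      -- instance (1)
      set U1 := fun i => U i \ C with hU1
      set T1 := fun i => T i \ C with hT1f
      have hUT1 : ∀ i, U1 i ⊆ T1 i := fun i =>
        Finset.sdiff_subset_sdiff (hUT i) (Finset.Subset.refl _)
      have hcl1 : ∀ i, Closed A1 (T1 i) := by
        intro i a ha h1
        have haA : a ∈ A := Multiset.mem_filter.1 ha |>.1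
        have h2C : ¬ a.2 ∈ C := (Multiset.mem_filter.1 ha).2
        exact Finset.mem_sdiff.2 ⟨hcl i a haA (Finset.mem_sdiff.1 h1).1, h2C⟩
      have hd1 : ∀ Y : Finset V, inDeg A1 Y = A.countP (fun a => arcEnters a Y ∧ ¬ a.2 ∈ C) := by
        intro Y
        rw [hA1, inDeg_eq_countP, Multiset.countP_filter]
      have hcond1 : Cond A1 U1 T1 := by
        intro X
        have stepA : pReq U1 T1 X ≤ pReq U1 T1 (X \ C) := by
          apply Finset.card_le_card
          intro i hi
          obtain ⟨-, h1, h2⟩ := Finset.mem_filter.1 hi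
          refine Finset.mem_filter.2 ⟨Finset.mem_univ _, ?_, ?_⟩
          · rw [Finset.eq_empty_iff_forall_notMem] at h1 ⊢
            intro v hv
            obtain ⟨hv1, hv2⟩ := Finset.mem_inter.1 hv
            exact h1 v (Finset.mem_inter.2 ⟨hv1, (Finset.mem_sdiff.1 hv2).1⟩)
          · obtain ⟨t, ht⟩ := h2
            obtain ⟨ht1, ht2⟩ := Finset.mem_inter.1 ht
            exact ⟨t, Finset.mem_inter.2 ⟨ht1,
              Finset.mem_sdiff.2 ⟨ht2, (Finset.mem_sdiff.1 ht1).2⟩⟩⟩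
        have stepB : pReq U1 T1 (X \ C) ≤ pReq U T (X \ C) := by
          apply Finset.card_le_card
          intro i hi
          obtain ⟨-, h1, h2⟩ := Finset.mem_filter.1 hi
          refine Finset.mem_filter.2 ⟨Finset.mem_univ _, ?_, ?_⟩
          · rw [Finset.eq_empty_iff_forall_notMem] at h1 ⊢
            intro v hv
            obtain ⟨hv1, hv2⟩ := Finset.mem_inter.1 hv
            exact h1 v (Finset.mem_inter.2 ⟨Finset.mem_sdiff.2
              ⟨hv1, (Finset.mem_sdiff.1 hv2).2⟩, hv2⟩)
          · obtain ⟨t, ht⟩ := h2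
            obtain ⟨ht1, ht2⟩ := Finset.mem_inter.1 ht
            exact ⟨t, Finset.mem_inter.2 ⟨(Finset.mem_sdiff.1 ht1).1, ht2⟩⟩
        have stepC := hcond (X \ C)
        have stepD : inDeg A (X \ C) ≤ inDeg A1 (X \ C) := by
          rw [hd1, inDeg_eq_countP]
          apply countP_mono_of_imp
          intro a _ hent
          exact ⟨hent, fun h2C => (Finset.mem_sdiff.1 hent.1).2 h2C⟩
        have stepE : inDeg A1 (X \ C) ≤ inDeg A1 X := by
          rw [hd1, hd1]
          apply countP_mono_of_imp
          intro a haA hh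
          obtain ⟨⟨h2m, h1m⟩, h2C⟩ := hh
          refine ⟨⟨(Finset.mem_sdiff.1 h2m).1, ?_⟩, h2C⟩
          have h1C : ¬ a.1 ∈ C := fun h => h2C (hCc a haA h)
          intro h1X
          exact h1m (Finset.mem_sdiff.2 ⟨h1X, h1C⟩)
        omega
      have hsum1 : (∑ i, (T1 i).card) ≤ n := by
        have hlt : ∑ i, (T1 i).card < ∑ i, (T i).card := by
          apply Finset.sum_lt_sum
          · intro i _
            exact Finset.card_le_card Finset.sdiff_subset
          · refine ⟨i₀, Finset.mem_univ _, Finset.card_lt_card ?_⟩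
            constructor
            · exact Finset.sdiff_subset
            · intro hsub
              have := hsub htsT
              exact (Finset.mem_sdiff.1 this).2 htsC
        omega
      obtain ⟨B1, hB1le, hB1spec⟩ := ih A1 U1 T1 hUT1 hcl1 hcond1 hsum1
      -- instance (2)
      set U2 := fun i => (U i ∩ C) ∪ (T i \ C) with hU2
      have hUT2 : ∀ i, U2 i ⊆ T i := by
        intro i
        apply Finset.union_subset
        · exact (Finset.inter_subset_left).trans (hUT i)
        · exact Finset.sdiff_subset
      have hcl2 : ∀ i, Closed A2 (T i) := fun i a ha h1 =>
        hcl i a ((Multiset.mem_filter.1 ha).1) h1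
      have hT12 : ∀ i, T i \ U2 i ⊆ C := by
        intro i v hv
        obtain ⟨hvT, hvU⟩ := Finset.mem_sdiff.1 hv
        by_contra hvC
        exact hvU (Finset.mem_union_right _ (Finset.mem_sdiff.2 ⟨hvT, hvC⟩))
      have hT42 : ∀ i, ((T i) ∩ C).Nonempty → C ⊆ T i := by
        intro i ht
        obtain ⟨t, ht⟩ := ht
        obtain ⟨h1, h2⟩ := Finset.mem_inter.1 ht
        exact hCsubT i t h1 h2
      have hd2 : ∀ Y : Finset V, inDeg A2 Y = A.countP (fun a => arcEnters a Y ∧ a.2 ∈ C) := by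
        intro Y
        rw [hA2, inDeg_eq_countP, Multiset.countP_filter]
      have hcond2 : Cond A2 U2 T := by
        intro X
        set JX := Finset.univ.filter
          (fun i => U2 i ∩ X = ∅ ∧ ((T i) ∩ X).Nonempty) with hJXd
        have key1 : ∀ i ∈ JX, ∀ v, v ∈ T i → v ∈ X → v ∈ C := by
          intro i hi v hvT hvX
          obtain ⟨-, h1, h2⟩ := Finset.mem_filter.1 hi
          by_contra hvC
          rw [Finset.eq_empty_iff_forall_notMem] at h1
          exact h1 v (Finset.mem_inter.2
            ⟨Finset.mem_union_right _ (Finset.mem_sdiff.2 ⟨hvT, hvC⟩), hvX⟩)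
        set W := Finset.univ.filter (fun v => ∀ i ∈ JX, v ∉ T i) with hWd
        set Xh := (X ∩ C) ∪ W with hXhd
        have hpXh : JX.card ≤ pReq U T Xh := by
          apply Finset.card_le_card
          intro i hi
          obtain ⟨-, h1, h2⟩ := Finset.mem_filter.1 hi
          refine Finset.mem_filter.2 ⟨Finset.mem_univ _, ?_, ?_⟩
          · rw [Finset.eq_empty_iff_forall_notMem]
            intro v hv
            obtain ⟨hvU, hvXh⟩ := Finset.mem_inter.1 hv
            rcases Finset.mem_union.1 hvXh with h | h
            · obtain ⟨hvX, hvC⟩ := Finset.mem_inter.1 h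
              rw [Finset.eq_empty_iff_forall_notMem] at h1
              exact h1 v (Finset.mem_inter.2
                ⟨Finset.mem_union_left _ (Finset.mem_inter.2 ⟨hvU, hvC⟩), hvX⟩)
            · exact (Finset.mem_filter.1 h).2 i hi (hUT i hvU)
          · obtain ⟨t, ht⟩ := h2
            obtain ⟨htT, htX⟩ := Finset.mem_inter.1 ht
            have htC : t ∈ C := key1 i hi t htT htX
            exact ⟨t, Finset.mem_inter.2 ⟨htT,
              Finset.mem_union_left _ (Finset.mem_inter.2 ⟨htX, htC⟩)⟩⟩
        have hdXh : inDeg A Xh ≤ inDeg A2 X := by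
          rw [hd2, inDeg_eq_countP]
          apply countP_mono_of_imp
          intro a haA hent
          obtain ⟨h2, h1⟩ := hent
          have h1W : a.1 ∉ W := fun h => h1 (Finset.mem_union_right _ h)
          have hex : ¬ (∀ j ∈ JX, a.1 ∉ T j) := by
            intro hall
            exact h1W (Finset.mem_filter.2 ⟨Finset.mem_univ _, hall⟩)
          push_neg at hex
          obtain ⟨j, hjJX, hjT⟩ := hex
          have h2T : a.2 ∈ T j := hcl j a haA hjT
          have h2CX : a.2 ∈ X ∧ a.2 ∈ C := by
            rcases Finset.mem_union.1 h2 with h | h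
            · obtain ⟨hx, hc⟩ := Finset.mem_inter.1 h
              exact ⟨hx, hc⟩
            · exact absurd h2T ((Finset.mem_filter.1 h).2 j hjJX)
          have h1X : a.1 ∉ X := by
            intro h1X'
            have h1C : a.1 ∈ C := key1 j hjJX a.1 hjT h1X'
            exact h1 (Finset.mem_union_left _ (Finset.mem_inter.2 ⟨h1X', h1C⟩))
          exact ⟨⟨h2CX.1, h1X⟩, h2CX.2⟩
        have hcXh := hcond Xh
        have hP2 : pReq U2 T X = JX.card := rfl
        omega
      obtain ⟨B2, hB2le, hB2spec⟩ := terminal_thm (∑ i, ((T i) \ U2 i).card)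
        A2 U2 T C hUT2 hcl2 hT12 hT42 hcond2 (le_refl _)
      -- combine
      refine ⟨fun i => B1 i + B2 i, ?_, ?_⟩
      · rw [Finset.sum_add_distrib]
        calc (∑ i, B1 i) + (∑ i, B2 i) ≤ A1 + A2 := add_le_add hB1le hB2le
          _ = A := hA12
      · intro i
        obtain ⟨b1s1, b1s2, b1s3⟩ := hB1spec i
        obtain ⟨b2s1, b2s2, b2s3⟩ := hB2spec i
        refine ⟨?_, ?_, ?_⟩
        · intro a ha
          rcases Multiset.mem_add.1 ha with h | h
          · obtain ⟨h1, h2⟩ := b1s1 a h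
            obtain ⟨h2T, h2U⟩ := Finset.mem_sdiff.1 h2
            obtain ⟨h2T', h2C⟩ := Finset.mem_sdiff.1 h2T
            exact ⟨(Finset.mem_sdiff.1 h1).1, Finset.mem_sdiff.2
              ⟨h2T', fun hU => h2U (Finset.mem_sdiff.2 ⟨hU, h2C⟩)⟩⟩
          · obtain ⟨h1, h2⟩ := b2s1 a h
            obtain ⟨h2T, h2U⟩ := Finset.mem_sdiff.1 h2
            refine ⟨h1, Finset.mem_sdiff.2 ⟨h2T, fun hU => ?_⟩⟩
            by_cases hC : a.2 ∈ C
            · exact h2U (Finset.mem_union_left _ (Finset.mem_inter.2 ⟨hU, hC⟩))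
            · exact h2U (Finset.mem_union_right _ (Finset.mem_sdiff.2 ⟨h2T, hC⟩))
        · intro v hv
          obtain ⟨hvT, hvU⟩ := Finset.mem_sdiff.1 hv
          rw [inDegV_add]
          by_cases hvC : v ∈ C
          · have hz : inDegV (B1 i) v = 0 := by
              rw [inDegV, Multiset.card_eq_zero, Multiset.filter_eq_nil]
              intro a ha hav
              have h2 := (b1s1 a ha).2
              obtain ⟨h2T, -⟩ := Finset.mem_sdiff.1 h2
              exact (Finset.mem_sdiff.1 h2T).2 (hav ▸ hvC)
            have h1 : inDegV (B2 i) v = 1 := by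
              apply b2s2
              refine Finset.mem_sdiff.2 ⟨hvT, fun h => ?_⟩
              rcases Finset.mem_union.1 h with h | h
              · exact hvU (Finset.mem_inter.1 h).1
              · exact (Finset.mem_sdiff.1 h).2 hvC
            omega
          · have h1 : inDegV (B1 i) v = 1 := by
              apply b1s2
              refine Finset.mem_sdiff.2 ⟨Finset.mem_sdiff.2 ⟨hvT, hvC⟩,
                fun h => hvU (Finset.mem_sdiff.1 h).1⟩
            have hz : inDegV (B2 i) v = 0 := by
              rw [inDegV, Multiset.card_eq_zero, Multiset.filter_eq_nil]
              intro a ha hav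
              have h2 := (b2s1 a ha).2
              exact hvC (hav ▸ hT12 i h2)
            omega
        · intro v hv
          have hm1 : ∀ b : V × V, b ∈ B1 i → b ∈ B1 i + B2 i :=
            fun b hb => Multiset.mem_add.2 (Or.inl hb)
          have hm2 : ∀ b : V × V, b ∈ B2 i → b ∈ B1 i + B2 i :=
            fun b hb => Multiset.mem_add.2 (Or.inr hb)
          by_cases hvC : v ∈ C
          · obtain ⟨u2, hu2, hr2⟩ := b2s3 v hv
            rcases Finset.mem_union.1 hu2 with h | h
            · exact ⟨u2, (Finset.mem_inter.1 h).1, Reaches.mono hm2 hr2⟩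
            · obtain ⟨u1, hu1, hr1⟩ := b1s3 u2 h
              exact ⟨u1, (Finset.mem_sdiff.1 hu1).1,
                (Reaches.mono hm1 hr1).trans (Reaches.mono hm2 hr2)⟩
          · obtain ⟨u1, hu1, hr1⟩ := b1s3 v (Finset.mem_sdiff.2 ⟨hv, hvC⟩)
            exact ⟨u1, (Finset.mem_sdiff.1 hu1).1, Reaches.mono hm1 hr1⟩

/-! ### final assembly -/

theorem kkt_main
    (A : Multiset (V × V)) (S : Type*) [Fintype S] [DecidableEq S] (π : S → V) :
    (∃ B : S → Multiset (V × V),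
        (∑ s : S, B s) ≤ A ∧ ∀ s : S, IsArborOn (B s) (QD A {π s}) (π s)) ↔
    ∀ X : Finset V,
      ((Finset.univ.filter fun s => π s ∈ PD A X).card : ℤ) -
          (Finset.univ.filter fun s => π s ∈ X).card
        ≤ (inDeg A X : ℤ) := by
  classical
  have hsplit : ∀ X : Finset V, (Finset.univ.filter fun s => π s ∈ PD A X).card =
      (Finset.univ.filter fun s => π s ∈ X).card +
      (Finset.univ.filter fun s => π s ∈ PD A X ∧ π s ∉ X).card := by
    intro X
    rw [← Finset.card_union_of_disjoint]
    · congr 1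
      ext s
      simp only [Finset.mem_union, Finset.mem_filter, Finset.mem_univ, true_and]
      constructor
      · intro h
        by_cases hX : π s ∈ X
        · exact Or.inl hX
        · exact Or.inr ⟨h, hX⟩
      · rintro (h | h)
        · exact mem_PD.2 ⟨π s, h, Relation.ReflTransGen.refl⟩
        · exact h.1
    · rw [Finset.disjoint_left]
      intro s h1 h2
      exact ((Finset.mem_filter.1 h2).2).2 ((Finset.mem_filter.1 h1).2)
  constructor
  · rintro ⟨B, hle, hspec⟩ X
    have hcount : ∀ s : S, π s ∈ PD A X → π s ∉ X → 1 ≤ inDeg (B s) X := by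
      intro s hPD hX
      obtain ⟨v, hvX, hr⟩ := mem_PD.1 hPD
      have hvQ : v ∈ QD A {π s} := mem_QD_singleton.2 hr
      have hrB : Reaches (B s) (π s) v := (hspec s).2.2.2.2 v hvQ
      obtain ⟨a, haB, h1, h2⟩ := reaches_cross (· ∉ X) hrB hX (not_not_intro hvX)
      rw [inDeg_eq_countP]
      have hpos : 0 < (B s).countP fun a => arcEnters a X :=
        Multiset.countP_pos.2 ⟨a, haB, show arcEnters a X from ⟨not_not.1 h2, h1⟩⟩
      omega
    have hsum2 : (Finset.univ.filter fun s => π s ∈ PD A X ∧ π s ∉ X).card ≤ inDeg A X := by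
      calc (Finset.univ.filter fun s => π s ∈ PD A X ∧ π s ∉ X).card
          = ∑ s : S, (if π s ∈ PD A X ∧ π s ∉ X then 1 else 0) := Finset.card_filter _ _
        _ ≤ ∑ s : S, inDeg (B s) X := by
            apply Finset.sum_le_sum
            intro s _
            split
            · next h => exact hcount s h.1 h.2
            · exact Nat.zero_le _
        _ = inDeg (∑ s : S, B s) X := (inDeg_sum _ _ _).symm
        _ ≤ inDeg A X := inDeg_le_of_le hle X
    have h3 := hsplit X
    omega
  · intro hcond
    set U := fun s : S => ({π s} : Finset V) with hU
    set T := fun s : S => QD A {π s} with hT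
    have hUT : ∀ s, U s ⊆ T s := fun s =>
      Finset.singleton_subset_iff.2 (mem_QD_singleton.2 (Reaches.refl A (π s)))
    have hcl : ∀ s, Closed A (T s) := fun s => QD_closed A {π s}
    have hpeq : ∀ X : Finset V, pReq U T X =
        (Finset.univ.filter fun s => π s ∈ PD A X ∧ π s ∉ X).card := by
      intro X
      unfold pReq
      apply congrArg
      apply Finset.filter_congr
      intro s _
      constructor
      · rintro ⟨h1, t, ht⟩
        obtain ⟨htT, htX⟩ := Finset.mem_inter.1 ht
        refine ⟨mem_PD.2 ⟨t, htX, mem_QD_singleton.1 htT⟩, ?_⟩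
        intro hX
        rw [Finset.eq_empty_iff_forall_notMem] at h1
        exact h1 (π s) (Finset.mem_inter.2 ⟨Finset.mem_singleton_self _, hX⟩)
      · rintro ⟨h1, h2⟩
        obtain ⟨v, hvX, hr⟩ := mem_PD.1 h1
        constructor
        · rw [Finset.eq_empty_iff_forall_notMem]
          intro w hw
          obtain ⟨hw1, hw2⟩ := Finset.mem_inter.1 hw
          rw [Finset.mem_singleton] at hw1
          exact h2 (hw1 ▸ hw2)
        · exact ⟨v, Finset.mem_inter.2 ⟨mem_QD_singleton.2 hr, hvX⟩⟩
    have hcnd : Cond A U T := by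
      intro X
      have h1 := hcond X
      have h2 := hsplit X
      rw [hpeq]
      omega
    obtain ⟨B, hle, hspec⟩ := thmR (∑ s, (T s).card) A U T hUT hcl hcnd (le_refl _)
    refine ⟨B, hle, fun s => ?_⟩
    obtain ⟨s1, s2, s3⟩ := hspec s
    refine ⟨mem_QD_singleton.2 (Reaches.refl A (π s)), ?_, ?_, ?_, ?_⟩
    · intro a ha
      obtain ⟨h1, h2⟩ := s1 a ha
      exact ⟨h1, (Finset.mem_sdiff.1 h2).1⟩
    · intro v hv hne
      apply s2
      refine Finset.mem_sdiff.2 ⟨hv, fun h => hne ?_⟩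
      rwa [hU, Finset.mem_singleton] at h
    · rw [inDegV, Multiset.card_eq_zero, Multiset.filter_eq_nil]
      intro a ha hav
      have h2 := (s1 a ha).2
      apply (Finset.mem_sdiff.1 h2).2
      rw [hU, hav]
      exact Finset.mem_singleton_self (π s)
    · intro v hv
      obtain ⟨u, hu, hr⟩ := s3 v hv
      rw [hU, Finset.mem_singleton] at hu
      exact hu ▸ hr

/-- **Kamiyama–Katoh–Takizawa theorem.** There is a packing of reachability
`s`-arborescences in the digraph `D = (V, A)`, one rooted at each element `s` of
the multiset `S`, iff `d⁻_A(X) ≥ |S_{P_D^X}| − |S_X|` for every `X ⊆ V`. -/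
theorem kamiyama_katoh_takizawa
    (V : Type) [Fintype V] [DecidableEq V]
    (A : Multiset (V × V)) (hA : ∀ a ∈ A, a.1 ≠ a.2)
    (S : Type) [Fintype S] [DecidableEq S] (π : S → V) :
    (∃ B : S → Multiset (V × V),
        (∑ s : S, B s) ≤ A ∧ ∀ s : S, IsArborOn (B s) (QD A {π s}) (π s)) ↔
    ∀ X : Finset V,
      ((Finset.univ.filter fun s => π s ∈ PD A X).card : ℤ) -
          (Finset.univ.filter fun s => π s ∈ X).card
        ≤ (inDeg A X : ℤ) :=
  kkt_main A S π

end ArborPaper
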